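/- Let A be an abelian category with projective covers and f : M → N an epimorphism in A (so Coker(f) = 0). If α : P₀ → M is a projective cover of M, then (α, f∘α) : (P₀, 1_{P₀}, P₀) → (M, f, N) is a projective cover of the object (M, f, N) in the arrow category of A. -/
import Mathlib


open CategoryTheory CategoryTheory.Limits ZeroObject

/-- `p : P ⟶ M` is a projective cover: `P` is projective, `p` is an epimorphism and `p` is
right minimal. -/
def IsProjectiveCover {C : Type*} [Category C] {P M : C} (p : P ⟶ M) : Prop :=
  Projective P ∧ Epi p ∧ ∀ θ : P ⟶ P, θ ≫ p = p → IsIso θ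

/-- The left component of an epimorphism in the arrow category of an abelian category
is an epimorphism. -/
lemma epi_left_of_epi_arrow {A : Type*} [Category A] [Abelian A]
    {X Y : Arrow A} (e : X ⟶ Y) [Epi e] : Epi e.left := by
  constructor
  intro Z u v huv
  let U : Y ⟶ Arrow.mk (0 : Z ⟶ (0 : A)) := Arrow.homMk (u := u) (v := 0) (by simp)
  let V : Y ⟶ Arrow.mk (0 : Z ⟶ (0 : A)) := Arrow.homMk (u := v) (v := 0) (by simp)
  have h : e ≫ U = e ≫ V := by
    apply CommaMorphism.ext
    · simpa [U, V] using huv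
    · exact (Limits.isZero_zero A).eq_of_tgt _ _
  have := congrArg CommaMorphism.left ((cancel_epi e).mp h)
  simpa [U, V] using this

/-- Let `A` be an abelian category with projective covers and `f : M ⟶ N`
an epimorphism (so `Coker f = 0`).  If `α : P₀ ⟶ M` is a projective cover of `M`, then
`(α, f∘α) : (P₀, 1, P₀) ⟶ (M, f, N)` is a projective cover of `(M, f, N)` in the arrow
category of `A`. -/
theorem projective_cover_in_arrow_category_of_epi
    {A : Type*} [Category A] [Abelian A]
    (hpc : ∀ M : A, ∃ (P : A) (p : P ⟶ M), IsProjectiveCover p)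
    {M N : A} (f : M ⟶ N) (hf : Epi f)
    {P₀ : A} (α : P₀ ⟶ M) (hα : IsProjectiveCover α) :
    IsProjectiveCover
      (Arrow.homMk (f := Arrow.mk (𝟙 P₀)) (g := Arrow.mk f)
        (u := α) (v := α ≫ f) (by simp)) := by
  obtain ⟨hP, hEpi, hMin⟩ := hα
  refine ⟨?_, ?_, ?_⟩
  · -- projectivity of Arrow.mk (𝟙 P₀)
    constructor
    intro E X g e he
    have hel : Epi e.left := epi_left_of_epi_arrow e
    obtain ⟨l, hl⟩ := hP.factors g.left e.left
    refine ⟨Arrow.homMk (u := l) (v := l ≫ E.hom) (by simp), ?_⟩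
    apply CommaMorphism.ext
    · simpa using hl
    · have hg : g.left ≫ X.hom = g.right := by simpa using g.w
      have he' : E.hom ≫ e.right = e.left ≫ X.hom := by simpa using e.w
      show (l ≫ E.hom) ≫ e.right = g.right
      rw [Category.assoc, he', ← Category.assoc, hl, hg]
  · -- epi
    constructor
    intro Z u v huv
    have hl : α ≫ u.left = α ≫ v.left := by
      simpa using congrArg CommaMorphism.left huv
    have hul : u.left = v.left := (cancel_epi α).mp hl
    have hr : (α ≫ f) ≫ u.right = (α ≫ f) ≫ v.right := by
      simpa using congrArg CommaMorphism.right huv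
    have hur : u.right = v.right := by
      have : Epi (α ≫ f) := epi_comp α f
      exact (cancel_epi (α ≫ f)).mp hr
    exact CommaMorphism.ext hul hur
  · -- right minimal
    intro θ hθ
    have hl : θ.left ≫ α = α := by simpa using congrArg CommaMorphism.left hθ
    have hw : θ.left = θ.right := by simpa using θ.w
    have : IsIso θ.left := hMin θ.left hl
    refine ⟨Arrow.homMk (u := inv θ.left) (v := inv θ.left) (by simp), ?_, ?_⟩
    · apply CommaMorphism.ext <;> simp [← hw]
    · apply CommaMorphism.ext <;> simp [← hw]
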